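/- Let P = ⊕_{i≥0} P_i be a nonnegatively graded module over the exterior algebra E = ⋀V*, and for each i ≥ 0 set N_i = { p ∈ P_i : ω·p = 0 for all ω ∈ ⋀^i V* }. Then: (1) N = ⊕_{i≥0} N_i is a graded E-submodule of P with N_0 = 0; (2) the quotient P/N has the property that for every i ≥ 1, any class p̄ ∈ (P/N)_i with ω·p̄ = 0 for all ω ∈ ⋀^i V* is zero; and (3) N is contained in every graded E-submodule N′ ⊆ P such that P/N′ has the property in (2). -/

import Mathlib

variable (k : Type) [Field k] (V : Type) [AddCommGroup V] [Module k V] [FiniteDimensional k V]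

/-- The `i`-th exterior power `⋀^i V*`, realized as the `i`-th power of the image of `V*`
inside the exterior algebra `E = ⋀ V*`. -/
noncomputable def wedgePow (i : ℕ) : Submodule k (ExteriorAlgebra k (Module.Dual k V)) :=
  (LinearMap.range (ExteriorAlgebra.ι k (M := Module.Dual k V))) ^ i

variable (P : Type) [AddCommGroup P] [Module k P]
  [Module (ExteriorAlgebra k (Module.Dual k V)) P]
  [IsScalarTower k (ExteriorAlgebra k (Module.Dual k V)) P]
  [SMulCommClass k (ExteriorAlgebra k (Module.Dual k V)) P]

/-- The subspace `{p ∈ P | ω • p = 0 for all ω ∈ ⋀^i V*}` of an `E = ⋀V*`-module `P`. -/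
noncomputable def annWedge (i : ℕ) : Submodule k P where
  carrier := {p : P | ∀ ω ∈ wedgePow k V i, ω • p = 0}
  add_mem' := by
    intro p q hp hq ω hω
    rw [smul_add, hp ω hω, hq ω hω, add_zero]
  zero_mem' := by
    intro ω hω
    rw [smul_zero]
  smul_mem' := by
    intro c p hp ω hω
    rw [← smul_comm c ω p, hp ω hω, smul_zero]

section Aux

variable {k V P}

lemma mem_annWedge_iff {i : ℕ} {p : P} :
    p ∈ annWedge k V P i ↔ ∀ ω ∈ wedgePow k V i, ω • p = 0 := Iff.rfl

/-- In an internal direct sum, if `Q j ≤ Pgr j` for all `j`, then any element of `Pgr i`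
lying in `⨆ j, Q j` actually lies in `Q i`. -/
lemma mem_component_of_mem_iSup {Pgr Q : ℕ → Submodule k P}
    (hdirect : DirectSum.IsInternal Pgr) (hQ : ∀ j, Q j ≤ Pgr j) {i : ℕ} {x : P}
    (hx : x ∈ Pgr i) (hxs : x ∈ ⨆ j, Q j) : x ∈ Q i := by
  classical
  obtain ⟨f, hf, hsum⟩ := (Submodule.mem_iSup_iff_exists_finsupp Q x).mp hxs
  have hind := hdirect.submodule_iSupIndep i
  have hsum' : x = f i + ∑ j ∈ (insert i f.support).erase i, f j := by
    rw [Finset.add_sum_erase _ _ (Finset.mem_insert_self i _)]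
    rw [← hsum, Finsupp.sum]
    exact (Finset.sum_insert_of_eq_zero_if_notMem
      (fun h => Finsupp.notMem_support_iff.mp h)).symm
  have hdiff : x - f i ∈ Pgr i := sub_mem hx (hQ i (hf i))
  have hdiff2 : x - f i ∈ ⨆ j, ⨆ _ : j ≠ i, Pgr j := by
    have : x - f i = ∑ j ∈ (insert i f.support).erase i, f j := by
      rw [hsum']; abel
    rw [this]
    refine Submodule.sum_mem _ fun j hj => ?_
    have hji : j ≠ i := Finset.ne_of_mem_erase hj
    exact Submodule.mem_iSup_of_mem j (Submodule.mem_iSup_of_mem hji (hQ j (hf j)))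
  have hx0 : x - f i = 0 := Submodule.disjoint_def.mp hind (x - f i) hdiff hdiff2
  have hxf : x = f i := by rwa [sub_eq_zero] at hx0
  rw [hxf]; exact hf i

/-- Degree shift: `⋀^j V*` maps `Pgr (i + j)` into `Pgr i`. -/
lemma smul_mem_degree {Pgr : ℕ → Submodule k P}
    (hact : ∀ (i : ℕ) (e : Module.Dual k V), ∀ p ∈ Pgr (i + 1),
      ExteriorAlgebra.ι k e • p ∈ Pgr i) :
    ∀ (j i : ℕ), ∀ ω ∈ wedgePow k V j, ∀ p ∈ Pgr (i + j), ω • p ∈ Pgr i := by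
  intro j
  induction j with
  | zero =>
    intro i ω hω p hp
    rw [wedgePow, pow_zero, Submodule.one_eq_span] at hω
    obtain ⟨c, rfl⟩ := Submodule.mem_span_singleton.mp hω
    rw [smul_assoc, one_smul]
    exact (Pgr i).smul_mem c hp
  | succ n ih =>
    intro i ω hω p hp
    rw [wedgePow, pow_succ] at hω
    refine Submodule.mul_induction_on hω ?_ ?_
    · rintro a ha b ⟨e, rfl⟩
      rw [mul_smul]
      exact ih i a ha _ (hact (i + n) e p hp)
    · intro x y hx hy
      rw [add_smul]
      exact (Pgr i).add_mem hx hy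

end Aux

theorem maximal_irredundant_quotient
    (Pgr : ℕ → Submodule k P)
    (hdirect : DirectSum.IsInternal Pgr)
    (hact : ∀ (i : ℕ) (e : Module.Dual k V), ∀ p ∈ Pgr (i + 1),
      ExteriorAlgebra.ι k e • p ∈ Pgr i)
    (hzero : ∀ (e : Module.Dual k V), ∀ p ∈ Pgr 0, ExteriorAlgebra.ι k e • p = 0) :
    -- (1) `N` is a graded `E`-submodule with `N_0 = 0`
    (Pgr 0 ⊓ annWedge k V P 0 = ⊥)
    ∧ (∀ (i : ℕ) (e : Module.Dual k V), ∀ p ∈ Pgr (i + 1) ⊓ annWedge k V P (i + 1),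
        ExteriorAlgebra.ι k e • p ∈ Pgr i ⊓ annWedge k V P i)
    -- (2) the quotient `P/N` is irredundant
    ∧ (∀ i : ℕ, 1 ≤ i → ∀ p ∈ Pgr i,
        (∀ ω ∈ wedgePow k V i, ω • p ∈ ⨆ j : ℕ, Pgr j ⊓ annWedge k V P j) →
        p ∈ ⨆ j : ℕ, Pgr j ⊓ annWedge k V P j)
    -- (3) `N` is the smallest graded `E`-submodule with irredundant quotient
    ∧ (∀ Ngr' : ℕ → Submodule k P,
        (∀ i : ℕ, Ngr' i ≤ Pgr i) →
        (∀ (i : ℕ) (e : Module.Dual k V), ∀ p ∈ Ngr' (i + 1),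
          ExteriorAlgebra.ι k e • p ∈ Ngr' i) →
        (∀ i : ℕ, 1 ≤ i → ∀ p ∈ Pgr i,
          (∀ ω ∈ wedgePow k V i, ω • p ∈ ⨆ j : ℕ, Ngr' j) → p ∈ ⨆ j : ℕ, Ngr' j) →
        ∀ i : ℕ, Pgr i ⊓ annWedge k V P i ≤ Ngr' i) := by
  have h1mem : (1 : ExteriorAlgebra k (Module.Dual k V)) ∈ wedgePow k V 0 := by
    rw [wedgePow, pow_zero]
    exact Submodule.one_le.mp le_rfl
  have hbot : Pgr 0 ⊓ annWedge k V P 0 = ⊥ := by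
    rw [eq_bot_iff]
    rintro p ⟨_, hpa⟩
    have := hpa 1 h1mem
    rwa [one_smul] at this
  refine ⟨hbot, ?_, ?_, ?_⟩
  · rintro i e p ⟨hp1, hp2⟩
    refine ⟨hact i e p hp1, fun ω hω => ?_⟩
    rw [← mul_smul]
    refine hp2 _ ?_
    rw [wedgePow, pow_succ]
    exact Submodule.mul_mem_mul hω ⟨e, rfl⟩
  · intro i _ p hp hker
    refine Submodule.mem_iSup_of_mem i ⟨hp, fun ω hω => ?_⟩
    have hp' : p ∈ Pgr (0 + i) := by rwa [Nat.zero_add]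
    have h0 : ω • p ∈ Pgr 0 := smul_mem_degree hact i 0 ω hω p hp'
    have hmem : ω • p ∈ Pgr 0 ⊓ annWedge k V P 0 :=
      mem_component_of_mem_iSup hdirect (fun j => inf_le_left) h0 (hker ω hω)
    rw [hbot] at hmem
    exact hmem
  · intro Ngr' hle hstable hirr i
    match i with
    | 0 =>
      rw [hbot]
      exact bot_le
    | (n + 1) =>
      rintro p ⟨hp1, hp2⟩
      have hsup : p ∈ ⨆ j, Ngr' j := by
        refine hirr (n + 1) (Nat.succ_le_succ (Nat.zero_le n)) p hp1 fun ω hω => ?_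
        rw [hp2 ω hω]
        exact zero_mem _
      exact mem_component_of_mem_iSup hdirect hle hp1 hsup
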